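/- Let a_1,…,a_n be real numbers with a_i > 0 for 1 ≤ i ≤ n', a_i = 0 for n' < i ≤ n'', a_i < 0 for n'' < i ≤ n, set a_{n+1} = −1, and suppose Σ_{i=1}^{n+1} a_i v_i = 0 where v_{n+1} = (a_1,…,a_n) and v_1,…,v_n is the standard basis of ℝⁿ. Let σ_{i_0} be the cone generated by {v_i : 1 ≤ i ≤ n+1, i ≠ i_0}. Then the cone generated by v_1,…,v_{n+1} equals both ∪_{i=1}^{n'} σ_i and ∪_{i=n''+1}^{n+1} σ_i. -/

import Mathlib

open Finset

def coneGen {n : ℕ} {ι : Type*} [Fintype ι] (w : ι → (Fin n → ℝ)) :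
    Set (Fin n → ℝ) :=
  {x | ∃ c : ι → ℝ, (∀ i, 0 ≤ c i) ∧ x = ∑ i, c i • w i}

lemma coneGen_sub {n : ℕ} {ι : Type*} [Fintype ι] (v : ι → (Fin n → ℝ))
    (p : ι → Prop) [DecidablePred p] :
    coneGen (fun j : {j // p j} => v j.1) ⊆ coneGen v := by
  rintro x ⟨c, hc, rfl⟩
  refine ⟨fun i => if h : p i then c ⟨i, h⟩ else 0, fun i => ?_, ?_⟩
  · by_cases h : p i <;> simp [h, hc]
  · have h1 : ∑ i ∈ Finset.univ.filter p,
        (if h : p i then c ⟨i, h⟩ else 0) • v i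
        = ∑ i, (if h : p i then c ⟨i, h⟩ else 0) • v i := by
      refine Finset.sum_subset (Finset.filter_subset _ _) fun i _ hi => ?_
      simp only [Finset.mem_filter, Finset.mem_univ, true_and] at hi
      simp [hi]
    have h2 : ∑ i ∈ Finset.univ.filter p,
        (if h : p i then c ⟨i, h⟩ else 0) • v i
        = ∑ j : {j // p j}, (if h : p j.1 then c ⟨j.1, h⟩ else 0) • v j.1 :=
      Finset.sum_subtype _ (by simp) _
    rw [← h1, h2]
    exact Finset.sum_congr rfl fun j _ => by simp [j.2]

lemma coneGen_key {n : ℕ} {ι : Type*} [Fintype ι] [DecidableEq ι]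
    (v : ι → (Fin n → ℝ)) (A : ι → ℝ) (hA : ∑ i, A i • v i = 0)
    (p : ι → Prop) [DecidablePred p] (hpos : ∀ i, p i → 0 < A i)
    (hneg : ∀ i, ¬ p i → A i ≤ 0) (hne : ∃ i, p i)
    {x} (hx : x ∈ coneGen v) :
    ∃ i₀, p i₀ ∧ x ∈ coneGen (fun j : {j // j ≠ i₀} => v j.1) := by
  obtain ⟨c, hc, rfl⟩ := hx
  obtain ⟨i₀, hi₀, hmin⟩ := Finset.exists_min_image (Finset.univ.filter p)
    (fun i => c i / A i) (by obtain ⟨i, hi⟩ := hne; exact ⟨i, by simp [hi]⟩)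
  simp only [Finset.mem_filter, Finset.mem_univ, true_and] at hi₀ hmin
  have hApos := hpos i₀ hi₀
  set t := c i₀ / A i₀ with ht
  have ht0 : 0 ≤ t := div_nonneg (hc i₀) hApos.le
  set d := fun i => c i - t * A i with hd
  have hd0 : ∀ i, 0 ≤ d i := by
    intro i
    by_cases hp : p i
    · have h1 := hmin i hp
      have hAi := hpos i hp
      have := (div_le_div_iff₀ hApos hAi).mp h1
      simp only [hd]
      rw [ht, sub_nonneg, div_mul_eq_mul_div, div_le_iff₀ hApos]
      linarith
    · have := hneg i hp
      have : 0 ≤ -(t * A i) := by nlinarith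
      simp only [hd]; linarith [hc i]
  have hdi₀ : d i₀ = 0 := by
    simp only [hd, ht]
    field_simp
    ring
  refine ⟨i₀, hi₀, ⟨fun j => d j.1, fun j => hd0 _, ?_⟩⟩
  have e1 : ∑ i, c i • v i = ∑ i, d i • v i := by
    simp only [hd, sub_smul, Finset.sum_sub_distrib, mul_smul]
    rw [← Finset.smul_sum, hA, smul_zero, sub_zero]
  have e2 : ∑ i ∈ Finset.univ.erase i₀, d i • v i = ∑ i, d i • v i :=
    Finset.sum_erase _ (by simp [hdi₀])
  have e3 : ∑ i ∈ Finset.univ.erase i₀, d i • v i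
      = ∑ j : {j // j ≠ i₀}, d j.1 • v j.1 :=
    Finset.sum_subtype _ (by simp) _
  rw [e1, ← e2, e3]

theorem fan_decompositions_flip (n n' n'' : ℕ) (hn' : 2 ≤ n') (hn'n'' : n' ≤ n'')
    (hn''n : n'' < n)
    (A : Fin (n + 1) → ℝ)
    (hapos : ∀ i : Fin (n + 1), (i : ℕ) < n' → 0 < A i)
    (hazero : ∀ i : Fin (n + 1), n' ≤ (i : ℕ) → (i : ℕ) < n'' → A i = 0)
    (haneg : ∀ i : Fin (n + 1), n'' ≤ (i : ℕ) → (i : ℕ) < n → A i < 0)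
    (halast : A (Fin.last n) = -1)
    (v : Fin (n + 1) → (Fin n → ℝ))
    (hv : ∀ i : Fin (n + 1), ∀ h : (i : ℕ) < n, v i = Pi.single (⟨i, h⟩ : Fin n) 1)
    (hvlast : ∀ j : Fin n, v (Fin.last n) j = A (Fin.castSucc j))
    (hsum : ∑ i, A i • v i = 0) :
    (coneGen v =
      ⋃ i₀ ∈ {i₀ : Fin (n + 1) | (i₀ : ℕ) < n'},
        coneGen (fun j : {j : Fin (n + 1) // j ≠ i₀} => v j.1)) ∧
    coneGen v =
      ⋃ i₀ ∈ {i₀ : Fin (n + 1) | n'' ≤ (i₀ : ℕ)},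
        coneGen (fun j : {j : Fin (n + 1) // j ≠ i₀} => v j.1) := by
  have hlast : ∀ i : Fin (n + 1), ¬ ((i : ℕ) < n) → i = Fin.last n := by
    intro i hi
    have := i.isLt
    exact Fin.ext (by simp only [Fin.val_last]; omega)
  constructor
  · apply Set.Subset.antisymm
    · intro x hx
      obtain ⟨i₀, hi₀, hmem⟩ := coneGen_key v A hsum (fun i => (i : ℕ) < n')
        (fun i hi => hapos i hi)
        (fun i hi => by
          replace hi : n' ≤ (i : ℕ) := by simpa using hi
          by_cases h1 : (i : ℕ) < n''
          · exact le_of_eq (hazero i hi h1)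
          · by_cases h2 : (i : ℕ) < n
            · exact (haneg i (by omega) h2).le
            · simp only [hlast i h2, halast]; norm_num)
        ⟨⟨0, Nat.succ_pos n⟩, by show (0 : ℕ) < n'; omega⟩ hx
      exact Set.mem_biUnion (show i₀ ∈ {i₀ : Fin (n+1) | (i₀ : ℕ) < n'} from hi₀) hmem
    · intro x hx
      simp only [Set.mem_iUnion] at hx
      obtain ⟨i₀, _, hx⟩ := hx
      exact coneGen_sub v (· ≠ i₀) hx
  · apply Set.Subset.antisymm
    · intro x hx
      have hA' : ∑ i, (-A i) • v i = 0 := by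
        simp only [neg_smul, Finset.sum_neg_distrib, hsum, neg_zero]
      obtain ⟨i₀, hi₀, hmem⟩ := coneGen_key v (fun i => -A i) hA'
        (fun i => n'' ≤ (i : ℕ))
        (fun i hi => by
          by_cases h2 : (i : ℕ) < n
          · simpa using haneg i hi h2
          · simp only [hlast i h2, halast]; norm_num)
        (fun i hi => by
          replace hi : (i : ℕ) < n'' := by simpa using hi
          simp only [neg_nonpos]
          by_cases h1 : (i : ℕ) < n'
          · exact (hapos i h1).le
          · exact le_of_eq (hazero i (by omega) hi).symm)
        ⟨Fin.last n, by simpa using hn''n.le⟩ hx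
      exact Set.mem_biUnion (show i₀ ∈ {i₀ : Fin (n+1) | n'' ≤ (i₀ : ℕ)} from hi₀) hmem
    · intro x hx
      simp only [Set.mem_iUnion] at hx
      obtain ⟨i₀, _, hx⟩ := hx
      exact coneGen_sub v (· ≠ i₀) hx
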